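/- Let M be a Hermitian matrix over ℂ indexed by (Fin dA × Fin dB), and let ρ be a matrix of the same type that is positive semidefinite, has trace 1, and whose partial transpose ρ^Γ is positive semidefinite (i.e. ρ is a PPT state). Then Re (trace (M * ρ)) ≤ ‖M^Γ‖. (This expresses h_PPT(M) ≤ ‖M^Γ‖_∞.) -/

import Mathlib

open Matrix
open scoped ComplexOrder

noncomputable section

/-- Partial transpose on the second tensor factor. -/
def ptrans {α β : Type*} (X : Matrix (α × β) (α × β) ℂ) : Matrix (α × β) (α × β) ℂ :=
  fun p q => X (p.1, q.2) (q.1, p.2)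

/-- L2 (Euclidean) operator norm of a matrix: the largest singular value. -/
def opNorm {n : Type*} [Fintype n] [DecidableEq n] (X : Matrix n n ℂ) : ℝ :=
  ‖Matrix.toEuclideanCLM (𝕜 := ℂ) X‖

lemma ptrans_trace_mul {α β : Type*} [Fintype α] [Fintype β]
    (X Y : Matrix (α × β) (α × β) ℂ) :
    Matrix.trace (X * Y) = Matrix.trace (ptrans X * ptrans Y) := by
  simp only [Matrix.trace, Matrix.diag, Matrix.mul_apply, ptrans]
  rw [← Finset.sum_product', ← Finset.sum_product']
  refine Fintype.sum_equiv
    (Equiv.mk (fun pq => ((pq.1.1, pq.2.2), (pq.2.1, pq.1.2)))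
      (fun pq => ((pq.1.1, pq.2.2), (pq.2.1, pq.1.2))) (fun _ => rfl) (fun _ => rfl)) _ _ ?_
  intro pq
  rfl

lemma ptrans_trace {α β : Type*} [Fintype α] [Fintype β]
    (X : Matrix (α × β) (α × β) ℂ) : Matrix.trace (ptrans X) = Matrix.trace X := rfl

lemma ptrans_isHermitian {α β : Type*} {X : Matrix (α × β) (α × β) ℂ}
    (hX : X.IsHermitian) : (ptrans X).IsHermitian := by
  ext p q
  have := congrFun (congrFun hX (p.1, q.2)) (q.1, p.2)
  simpa [Matrix.conjTranspose_apply, ptrans] using this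

lemma trace_mul_le_opNorm {n : Type*} [Fintype n] [DecidableEq n]
    (A σ : Matrix n n ℂ) (hσ : σ.PosSemidef) :
    (Matrix.trace (A * σ)).re ≤ opNorm A * (Matrix.trace σ).re := by
  obtain ⟨B, rfl⟩ : ∃ B : Matrix n n ℂ, σ = Bᴴ * B := by
    open scoped MatrixOrder in
    obtain ⟨X, hX, -, hXσ⟩ :=
      sub_zero σ ▸ CFC.exists_sqrt_of_isSelfAdjoint_of_quasispectrumRestricts hσ.isHermitian
        (QuasispectrumRestricts.nnreal_of_nonneg hσ.nonneg)
    exact ⟨X, by rw [sub_zero] at hXσ; rw [← hXσ]; nth_rewrite 1 [← hX.star_eq]; rfl⟩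
  have htr2 : Matrix.trace (A * (Bᴴ * B)) = Matrix.trace (B * A * Bᴴ) := by
    rw [Matrix.trace_mul_comm, Matrix.mul_assoc, Matrix.trace_mul_comm, Matrix.mul_assoc]
  have htr3 : Matrix.trace (Bᴴ * B) = Matrix.trace (B * Bᴴ) := Matrix.trace_mul_comm _ _
  rw [htr2, htr3]
  have key : ∀ i, ((B * A * Bᴴ) i i).re ≤ opNorm A * ((B * Bᴴ) i i).re := by
    intro i
    have h1 : (B * A * Bᴴ) i i = inner ℂ ((WithLp.equiv 2 (n → ℂ)).symm (fun j => star (B i j)))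
        (Matrix.toEuclideanCLM (𝕜 := ℂ) A ((WithLp.equiv 2 (n → ℂ)).symm (fun j => star (B i j)))) := by
      rw [PiLp.inner_apply]
      simp only [WithLp.equiv_symm_apply, Matrix.toEuclideanCLM_toLp, WithLp.ofLp_toLp,
        Matrix.toLin'_apply, Matrix.mulVec, dotProduct, Matrix.mul_apply,
        Matrix.conjTranspose_apply, RCLike.inner_apply, starRingEnd_apply, star_star,
        Finset.mul_sum]
      simp only [Finset.sum_mul]
      rw [Finset.sum_comm]
      refine Finset.sum_congr rfl fun j _ => ?_
      exact Finset.sum_congr rfl fun k _ => by ring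
    have h2 : ((B * Bᴴ) i i).re
        = ‖((WithLp.equiv 2 (n → ℂ)).symm (fun j => star (B i j)) : EuclideanSpace ℂ n)‖ ^ 2 := by
      rw [EuclideanSpace.norm_eq, Real.sq_sqrt (by positivity)]
      simp only [Matrix.mul_apply, Matrix.conjTranspose_apply, WithLp.equiv_symm_apply, WithLp.ofLp_toLp]
      rw [Complex.re_sum]
      refine Finset.sum_congr rfl fun j _ => ?_
      simp [show (star (B i j) : ℂ) = starRingEnd ℂ (B i j) from rfl, Complex.mul_conj',
        ← Complex.ofReal_pow]
    rw [h1, h2]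
    set x : EuclideanSpace ℂ n := (WithLp.equiv 2 (n → ℂ)).symm (fun j => star (B i j))
    calc (inner ℂ x (Matrix.toEuclideanCLM (𝕜 := ℂ) A x) : ℂ).re
        ≤ ‖(inner ℂ x (Matrix.toEuclideanCLM (𝕜 := ℂ) A x) : ℂ)‖ := Complex.re_le_norm _
      _ ≤ ‖x‖ * ‖Matrix.toEuclideanCLM (𝕜 := ℂ) A x‖ := norm_inner_le_norm _ _
      _ ≤ ‖x‖ * (‖Matrix.toEuclideanCLM (𝕜 := ℂ) A‖ * ‖x‖) := by
          gcongr; exact (Matrix.toEuclideanCLM (𝕜 := ℂ) A).le_opNorm x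
      _ = opNorm A * ‖x‖ ^ 2 := by rw [opNorm]; ring
  calc (Matrix.trace (B * A * Bᴴ)).re = ∑ i, ((B * A * Bᴴ) i i).re := by
        rw [Matrix.trace]; exact Complex.re_sum _ _
    _ ≤ ∑ i, opNorm A * ((B * Bᴴ) i i).re := Finset.sum_le_sum fun i _ => key i
    _ = opNorm A * (Matrix.trace (B * Bᴴ)).re := by
        rw [← Finset.mul_sum, Matrix.trace, Complex.re_sum]
        rfl

/-- Theorem: for any Hermitian `M` and any PPT state `ρ`,
`Re tr(M ρ) ≤ ‖M^Γ‖`, i.e. `h_PPT(M) ≤ ‖M^Γ‖_∞`. -/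
theorem hPPT_le_opNorm_ptrans {dA dB : ℕ}
    (M ρ : Matrix (Fin dA × Fin dB) (Fin dA × Fin dB) ℂ)
    (hM : M.IsHermitian) (hρ : ρ.PosSemidef) (htr : ρ.trace = 1)
    (hppt : (ptrans ρ).PosSemidef) :
    (Matrix.trace (M * ρ)).re ≤ opNorm (ptrans M) := by
  rw [ptrans_trace_mul M ρ]
  have h := trace_mul_le_opNorm (ptrans M) (ptrans ρ) hppt
  rwa [ptrans_trace, htr, show ((1 : ℂ)).re = 1 from rfl, mul_one] at h
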